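/- Assume (Al) and that for every μ ∈ 𝒫₂(H) the map (x,q) ↦ l(x,μ,q) is Borel measurable on H × Λ̃. For Borel measurable X : (0,1) → H with ∫_0^1 |X(ω)|² dω < ∞ and Borel measurable Q : (0,1) → Λ with Q(ω) ∈ Λ̃ a.e. and ∫_0^1 |Q(ω)|²_Λ dω < ∞, define L(X,Q) := ∫_0^1 l(X(ω), X_#𝓛¹, Q(ω)) dω. Then L(X,Q) is well-defined and finite, and there is a constant C' ≥ 0 such that |L(X,Q) − L(Y,Q)| ≤ C'·(∫_0^1 |X(ω) − Y(ω)|²_{−1} dω)^{1/2} for all such X, Y and Q. -/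

import Mathlib

open MeasureTheory
open scoped RealInnerProductSpace ENNReal

set_option linter.unusedSectionVars false
set_option linter.unusedVariables false
set_option maxHeartbeats 1000000

section

variable {H : Type*} [NormedAddCommGroup H] [InnerProductSpace ℝ H] [CompleteSpace H]
  [SecondCountableTopology H] [MeasurableSpace H] [BorelSpace H]
variable {Λ : Type*} [NormedAddCommGroup Λ] [InnerProductSpace ℝ Λ] [CompleteSpace Λ]
  [SecondCountableTopology Λ] [MeasurableSpace Λ] [BorelSpace Λ]

/-- `μ` is a Borel probability measure on `H` with finite second moment. -/
def IsP2 (μ : Measure H) : Prop :=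
  IsProbabilityMeasure μ ∧ (∫⁻ x, (‖x‖₊ : ℝ≥0∞) ^ 2 ∂μ) < ⊤

/-- The `r`-Wasserstein distance `d_r` on probability measures on `H`. -/
noncomputable def dr (r : ℝ) (μ β : Measure H) : ℝ :=
  sInf { c : ℝ | ∃ γ : Measure (H × H), IsProbabilityMeasure γ ∧
      γ.map Prod.fst = μ ∧ γ.map Prod.snd = β ∧
      c = (∫ p, ‖p.1 - p.2‖ ^ r ∂γ) ^ (1 / r) }

/-- The weak norm `|x|_{-1} = ⟨Bx, x⟩^{1/2}`. -/
noncomputable def nrmB (B : H →L[ℝ] H) (x : H) : ℝ := Real.sqrt ⟪B x, x⟫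

/-- The `r`-Wasserstein distance `d_{-1,r}` with respect to the weak norm `|·|_{-1}`. -/
noncomputable def drB (B : H →L[ℝ] H) (r : ℝ) (μ β : Measure H) : ℝ :=
  sInf { c : ℝ | ∃ γ : Measure (H × H), IsProbabilityMeasure γ ∧
      γ.map Prod.fst = μ ∧ γ.map Prod.snd = β ∧
      c = (∫ p, nrmB B (p.1 - p.2) ^ r ∂γ) ^ (1 / r) }

/-- The Hamiltonian `𝓗(x,μ,p) = inf_{q ∈ Λ̃} (⟨f(x,μ,q), p⟩ + l(x,μ,q))`. -/
noncomputable def Ham (f : H → Measure H → Λ → H) (l : H → Measure H → Λ → ℝ)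
    (Λt : Set Λ) (x : H) (μ : Measure H) (p : H) : ℝ :=
  sInf ((fun q => ⟪f x μ q, p⟫ + l x μ q) '' Λt)

/- ### Auxiliary lemmas -/

lemma nrmB_nonneg' (B : H →L[ℝ] H) (x : H) : 0 ≤ nrmB B x := Real.sqrt_nonneg _

lemma nrmB_zero' (B : H →L[ℝ] H) : nrmB B 0 = 0 := by simp [nrmB]

lemma nrmB_le' (B : H →L[ℝ] H) (x : H) : nrmB B x ≤ Real.sqrt ‖B‖ * ‖x‖ := by
  have h1 : ⟪B x, x⟫ ≤ ‖B‖ * ‖x‖ ^ 2 := by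
    calc ⟪B x, x⟫ ≤ ‖B x‖ * ‖x‖ := real_inner_le_norm _ _
    _ ≤ (‖B‖ * ‖x‖) * ‖x‖ :=
        mul_le_mul_of_nonneg_right (B.le_opNorm x) (norm_nonneg _)
    _ = ‖B‖ * ‖x‖ ^ 2 := by ring
  calc nrmB B x ≤ Real.sqrt (‖B‖ * ‖x‖ ^ 2) := Real.sqrt_le_sqrt h1
  _ = Real.sqrt ‖B‖ * ‖x‖ := by
      rw [Real.sqrt_mul (norm_nonneg _), Real.sqrt_sq (norm_nonneg _)]

lemma nrmB_measurable' (B : H →L[ℝ] H) : Measurable (nrmB B) :=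
  (Real.continuous_sqrt.comp
    (continuous_inner.comp (B.continuous.prodMk continuous_id))).measurable

lemma drB_bddBelow' (B : H →L[ℝ] H) (r : ℝ) (μ β : Measure H) :
    BddBelow { c : ℝ | ∃ γ : Measure (H × H), IsProbabilityMeasure γ ∧
      γ.map Prod.fst = μ ∧ γ.map Prod.snd = β ∧
      c = (∫ p, nrmB B (p.1 - p.2) ^ r ∂γ) ^ (1 / r) } := by
  refine ⟨0, fun c hc => ?_⟩
  obtain ⟨γ, _, _, _, rfl⟩ := hc
  exact Real.rpow_nonneg (integral_nonneg fun p => Real.rpow_nonneg (nrmB_nonneg' B _) r) _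

lemma drB_self_nonpos' (B : H →L[ℝ] H) {r : ℝ} (hr : 1 ≤ r) (μ : Measure H)
    [IsProbabilityMeasure μ] : drB B r μ μ ≤ 0 := by
  have hr0 : r ≠ 0 := by linarith
  apply csInf_le (drB_bddBelow' B r μ μ)
  have hd : Measurable fun x : H => (x, x) := measurable_id.prodMk measurable_id
  refine ⟨μ.map (fun x => (x, x)), ?_, ?_, ?_, ?_⟩
  · exact Measure.isProbabilityMeasure_map hd.aemeasurable
  · rw [Measure.map_map measurable_fst hd]
    simp [Function.comp_def]
  · rw [Measure.map_map measurable_snd hd]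
    simp [Function.comp_def]
  · have : ∫ p, nrmB B (p.1 - p.2) ^ r ∂(μ.map (fun x => (x, x))) = 0 := by
      rw [integral_map hd.aemeasurable]
      · simp [nrmB_zero', Real.zero_rpow hr0]
      · exact (((nrmB_measurable' B).comp
          (measurable_fst.sub measurable_snd)).pow_const _).aestronglyMeasurable
    rw [this, Real.zero_rpow (by positivity)]

lemma drB_le_coupling' {α : Type*} [MeasurableSpace α] (B : H →L[ℝ] H) (r : ℝ)
    (m : Measure α) [IsProbabilityMeasure m] {X Y : α → H}
    (hX : Measurable X) (hY : Measurable Y) :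
    drB B r (m.map X) (m.map Y) ≤ (∫ ω, nrmB B (X ω - Y ω) ^ r ∂m) ^ (1 / r) := by
  apply csInf_le (drB_bddBelow' B r _ _)
  refine ⟨m.map (fun ω => (X ω, Y ω)), ?_, ?_, ?_, ?_⟩
  · exact Measure.isProbabilityMeasure_map (hX.prodMk hY).aemeasurable
  · rw [Measure.map_map measurable_fst (hX.prodMk hY)]; rfl
  · rw [Measure.map_map measurable_snd (hX.prodMk hY)]; rfl
  · rw [integral_map (hX.prodMk hY).aemeasurable]
    exact (((nrmB_measurable' B).comp
      (measurable_fst.sub measurable_snd)).pow_const _).aestronglyMeasurable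

lemma holder_one' {α : Type*} [MeasurableSpace α] (m : Measure α) [IsProbabilityMeasure m]
    {g : α → ℝ} (hg : AEStronglyMeasurable g m) (hg0 : ∀ ω, 0 ≤ g ω)
    (hg2 : Integrable (fun ω => g ω ^ 2) m) :
    ∫ ω, g ω ∂m ≤ Real.sqrt (∫ ω, g ω ^ 2 ∂m) := by
  have hmem : MemLp g 2 m := (memLp_two_iff_integrable_sq hg).2 hg2
  have hone : MemLp (fun _ : α => (1 : ℝ)) 2 m := memLp_const 1
  have h2 : ENNReal.ofReal (2:ℝ) = 2 := by norm_num
  have := integral_mul_le_Lp_mul_Lq_of_nonneg (Real.holderConjugate_iff.mpr ⟨by norm_num,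
    by norm_num⟩) (Filter.Eventually.of_forall hg0)
    (Filter.Eventually.of_forall (fun _ => zero_le_one)) (h2 ▸ hmem) (h2 ▸ hone)
  simp only [mul_one, Real.one_rpow] at this
  calc ∫ ω, g ω ∂m
      ≤ (∫ ω, g ω ^ (2:ℝ) ∂m) ^ (1/(2:ℝ)) * (∫ _ω, (1:ℝ) ∂m) ^ (1/(2:ℝ)) := this
  _ = Real.sqrt (∫ ω, g ω ^ 2 ∂m) := by
      rw [integral_const]
      simp only [probReal_univ, measure_univ, ENNReal.toReal_one, one_smul, Real.one_rpow, mul_one]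
      rw [← Real.sqrt_eq_rpow]
      congr 2
      funext ω
      rw [show (2:ℝ) = ((2:ℕ):ℝ) by norm_num, Real.rpow_natCast]

lemma holder_r' {α : Type*} [MeasurableSpace α] (m : Measure α) [IsProbabilityMeasure m]
    {g : α → ℝ} {r : ℝ} (hr1 : 1 ≤ r) (hr2 : r < 2)
    (hg : AEStronglyMeasurable g m) (hg0 : ∀ ω, 0 ≤ g ω)
    (hg2 : Integrable (fun ω => g ω ^ 2) m) :
    (∫ ω, g ω ^ r ∂m) ^ (1/r) ≤ Real.sqrt (∫ ω, g ω ^ 2 ∂m) := by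
  have hr0 : (0:ℝ) < r := by linarith
  have hmem : MemLp g 2 m := (memLp_two_iff_integrable_sq hg).2 hg2
  have hmemr : MemLp (fun ω => g ω ^ r) (ENNReal.ofReal (2/r)) m := by
    have := hmem.norm_rpow_div (ENNReal.ofReal r)
    have htr : (ENNReal.ofReal r).toReal = r := ENNReal.toReal_ofReal hr0.le
    have hdiv : (2 : ℝ≥0∞) / ENNReal.ofReal r = ENNReal.ofReal (2/r) := by
      rw [ENNReal.ofReal_div_of_pos hr0]
      norm_num
    rw [htr, hdiv] at this
    exact this.ae_eq (Filter.Eventually.of_forall fun ω => by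
      rw [Real.norm_of_nonneg (hg0 ω)])
  have hpq : Real.HolderConjugate (2/r) (2/(2-r)) := by
    rw [Real.holderConjugate_iff]
    constructor
    · rw [lt_div_iff₀ hr0]; linarith
    · have h1 : r ≠ 0 := ne_of_gt hr0
      have h2 : (2:ℝ) - r ≠ 0 := by intro h; linarith [(sub_eq_zero.mp h)]
      field_simp
      ring
  have hone : MemLp (fun _ : α => (1 : ℝ)) (ENNReal.ofReal (2/(2-r))) m := memLp_const 1
  have hh := integral_mul_le_Lp_mul_Lq_of_nonneg (μ := m) hpq
    (Filter.Eventually.of_forall fun ω => Real.rpow_nonneg (hg0 ω) r)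
    (Filter.Eventually.of_forall (fun _ : α => zero_le_one)) hmemr hone
  simp only [mul_one, Real.one_rpow] at hh
  rw [integral_const] at hh
  simp only [probReal_univ, measure_univ, ENNReal.toReal_one, one_smul, Real.one_rpow, mul_one] at hh
  have hcomp : ∀ ω, (g ω ^ r) ^ ((2:ℝ)/r) = g ω ^ (2:ℕ) := by
    intro ω
    rw [← Real.rpow_natCast (g ω) 2, ← Real.rpow_mul (hg0 ω)]
    congr 1
    field_simp
    norm_num
  rw [integral_congr_ae (Filter.Eventually.of_forall hcomp)] at hh
  have hI2 : (0:ℝ) ≤ ∫ ω, g ω ^ 2 ∂m := integral_nonneg fun ω => sq_nonneg _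
  have hIr : (0:ℝ) ≤ ∫ ω, g ω ^ r ∂m :=
    integral_nonneg fun ω => Real.rpow_nonneg (hg0 ω) r
  calc (∫ ω, g ω ^ r ∂m) ^ (1/r)
      ≤ ((∫ ω, g ω ^ 2 ∂m) ^ (1/(2/r))) ^ (1/r) :=
        Real.rpow_le_rpow hIr hh (by positivity)
    _ = (∫ ω, g ω ^ 2 ∂m) ^ ((1/(2/r)) * (1/r)) := by rw [← Real.rpow_mul hI2]
    _ = (∫ ω, g ω ^ 2 ∂m) ^ (1/(2:ℝ)) := by
        congr 1
        field_simp
    _ = Real.sqrt (∫ ω, g ω ^ 2 ∂m) := (Real.sqrt_eq_rpow _).symm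

lemma integrable_sq_of_lintegral' {α E : Type*} [MeasurableSpace α] [NormedAddCommGroup E]
    {m : Measure α} {X : α → E} (hX : AEStronglyMeasurable X m)
    (h2 : (∫⁻ ω, (‖X ω‖₊ : ℝ≥0∞) ^ 2 ∂m) < ⊤) :
    Integrable (fun ω => ‖X ω‖ ^ 2) m := by
  refine ⟨(hX.norm.pow 2), ?_⟩
  have heq : ∀ ω, (‖(‖X ω‖ ^ 2 : ℝ)‖₊ : ℝ≥0∞) = (‖X ω‖₊ : ℝ≥0∞) ^ 2 := by
    intro ω
    rw [nnnorm_pow, nnnorm_norm]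
    push_cast
    ring
  show (∫⁻ ω, (‖(‖X ω‖ ^ 2 : ℝ)‖₊ : ℝ≥0∞) ∂m) < ⊤
  rw [lintegral_congr heq]
  exact h2

lemma integrable_norm_of_sq' {α E : Type*} [MeasurableSpace α] [NormedAddCommGroup E]
    {m : Measure α} [IsFiniteMeasure m] {X : α → E} (hX : AEStronglyMeasurable X m)
    (h2 : Integrable (fun ω => ‖X ω‖ ^ 2) m) :
    Integrable (fun ω => ‖X ω‖) m := by
  have hb : Integrable (fun ω => 1 + ‖X ω‖ ^ 2) m := (integrable_const (1:ℝ)).add h2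
  refine Integrable.mono' hb hX.norm ?_
  refine Filter.Eventually.of_forall fun ω => ?_
  rw [Real.norm_of_nonneg (norm_nonneg _)]
  nlinarith [sq_nonneg (‖X ω‖ - 1)]

/-- Under (Al) and Borel measurability of `l` on `H × Λ̃`, the lifted
running cost `L(X,Q) = ∫₀¹ l(X(ω),X_#𝓛¹,Q(ω)) dω` is well defined (the integrand is
integrable), and there is `C' ≥ 0` with
`|L(X,Q) − L(Y,Q)| ≤ C'·(∫₀¹ |X(ω)−Y(ω)|²_{−1} dω)^{1/2}`. -/
theorem statement13
    (r : ℝ) (hr1 : 1 ≤ r) (hr2 : r < 2)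
    (B : H →L[ℝ] H)
    (hBsa : ∀ x y : H, ⟪B x, y⟫ = ⟪x, B y⟫)
    (hBpos : ∀ x : H, x ≠ 0 → 0 < ⟪B x, x⟫)
    (l₁ : H → Measure H → ℝ) (l₂ : H → Measure H → Λ → ℝ)
    (Λt : Set Λ) (hΛne : Λt.Nonempty) (hΛconv : Convex ℝ Λt)
    -- Assumption (Al)
    (Cl : ℝ) (hCl : 0 ≤ Cl)
    (hl_lip : ∀ (x y : H) (μ β : Measure H) (q : Λ), IsP2 μ → IsP2 β → q ∈ Λt →
      |l₁ x μ - l₁ y β| + |l₂ x μ q - l₂ y β q| ≤ Cl * (nrmB B (x - y) + drB B r μ β))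
    (C₁ C₂ C₃ : ℝ) (hC₁ : 0 ≤ C₁) (hC₂ : 0 < C₂) (hC₃ : 0 < C₃)
    (hl₂bd : ∀ (x : H) (μ : Measure H) (q : Λ), IsP2 μ → q ∈ Λt →
      -C₁ + C₂ * ‖q‖ ^ 2 ≤ l₂ x μ q ∧ l₂ x μ q ≤ C₁ + C₃ * ‖q‖ ^ 2)
    -- Borel measurability of `l` on `H × Λ̃`
    (hlm : ∀ μ : Measure H,
      Measurable (fun z : H × Λt => l₁ z.1 μ + l₂ z.1 μ (z.2 : Λ))) :
    ∃ C' : ℝ, 0 ≤ C' ∧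
      ∀ (X Y : ℝ → H) (Q : ℝ → Λ), Measurable X → Measurable Y → Measurable Q →
        (∫⁻ ω in Set.Ioo (0:ℝ) 1, (‖X ω‖₊ : ℝ≥0∞) ^ 2) < ⊤ →
        (∫⁻ ω in Set.Ioo (0:ℝ) 1, (‖Y ω‖₊ : ℝ≥0∞) ^ 2) < ⊤ →
        (∀ᵐ ω ∂(volume.restrict (Set.Ioo (0:ℝ) 1)), Q ω ∈ Λt) →
        (∫⁻ ω in Set.Ioo (0:ℝ) 1, (‖Q ω‖₊ : ℝ≥0∞) ^ 2) < ⊤ →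
        Integrable
          (fun ω => l₁ (X ω) (Measure.map X (volume.restrict (Set.Ioo (0:ℝ) 1))) +
            l₂ (X ω) (Measure.map X (volume.restrict (Set.Ioo (0:ℝ) 1))) (Q ω))
          (volume.restrict (Set.Ioo (0:ℝ) 1)) ∧
        |(∫ ω in Set.Ioo (0:ℝ) 1,
              (l₁ (X ω) (Measure.map X (volume.restrict (Set.Ioo (0:ℝ) 1))) +
                l₂ (X ω) (Measure.map X (volume.restrict (Set.Ioo (0:ℝ) 1))) (Q ω))) -
            (∫ ω in Set.Ioo (0:ℝ) 1,
              (l₁ (Y ω) (Measure.map Y (volume.restrict (Set.Ioo (0:ℝ) 1))) +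
                l₂ (Y ω) (Measure.map Y (volume.restrict (Set.Ioo (0:ℝ) 1))) (Q ω)))|
          ≤ C' * Real.sqrt (∫ ω in Set.Ioo (0:ℝ) 1, nrmB B (X ω - Y ω) ^ 2) := by  classical
  set m : Measure ℝ := volume.restrict (Set.Ioo (0:ℝ) 1) with hm
  haveI hmP : IsProbabilityMeasure m := ⟨by rw [hm, Measure.restrict_apply_univ]; simp⟩
  obtain ⟨q₀, hq₀⟩ := hΛne
  have hrne : r ≠ 0 := by linarith
  -- P2 property of pushforwards
  have hP2 : ∀ (X : ℝ → H), Measurable X →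
      (∫⁻ ω, (‖X ω‖₊ : ℝ≥0∞) ^ 2 ∂m) < ⊤ → IsP2 (m.map X) := by
    intro X hX h2
    refine ⟨Measure.isProbabilityMeasure_map hX.aemeasurable, ?_⟩
    rw [lintegral_map (measurable_nnnorm.coe_nnreal_ennreal.pow_const 2) hX]
    exact h2
  -- key integrability claim
  have key : ∀ (X : ℝ → H) (Q : ℝ → Λ), Measurable X → Measurable Q →
      (∫⁻ ω, (‖X ω‖₊ : ℝ≥0∞) ^ 2 ∂m) < ⊤ →
      (∀ᵐ ω ∂m, Q ω ∈ Λt) →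
      (∫⁻ ω, (‖Q ω‖₊ : ℝ≥0∞) ^ 2 ∂m) < ⊤ →
      Integrable (fun ω => l₁ (X ω) (m.map X) + l₂ (X ω) (m.map X) (Q ω)) m := by
    intro X Q hX hQ hX2 hQae hQ2
    set μ : Measure H := m.map X with hμ
    have hμP2 : IsP2 μ := hP2 X hX hX2
    haveI : IsProbabilityMeasure μ := hμP2.1
    -- a.e. modification of Q landing in Λt everywhere
    set T : Set ℝ := toMeasurable m {ω | Q ω ∉ Λt} with hTdef
    have hTmeas : MeasurableSet T := measurableSet_toMeasurable _ _
    have hT0 : m T = 0 := by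
      rw [hTdef, measure_toMeasurable]
      exact ae_iff.mp hQae
    set Q' : ℝ → Λ := fun ω => if ω ∈ T then q₀ else Q ω with hQ'def
    have hQ'm : Measurable Q' := Measurable.ite hTmeas measurable_const hQ
    have hQ'Λ : ∀ ω, Q' ω ∈ Λt := by
      intro ω
      by_cases h : ω ∈ T
      · simp only [hQ'def, if_pos h]; exact hq₀
      · simp only [hQ'def, if_neg h]
        by_contra hc
        exact h (subset_toMeasurable m _ hc)
    have hQQ' : ∀ᵐ ω ∂m, Q' ω = Q ω := by
      refine ae_iff.mpr (measure_mono_null ?_ hT0)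
      intro ω hω
      simp only [Set.mem_setOf_eq] at hω
      by_contra h
      exact hω (if_neg h)
    -- a.e.-strong measurability of the integrand
    have hmeasF : Measurable (fun ω => l₁ (X ω) μ + l₂ (X ω) μ (Q' ω)) := by
      have hpair : Measurable (fun ω => ((X ω, ⟨Q' ω, hQ'Λ ω⟩) : H × Λt)) :=
        hX.prodMk (hQ'm.subtype_mk)
      exact (hlm μ).comp hpair
    have haesm : AEStronglyMeasurable (fun ω => l₁ (X ω) μ + l₂ (X ω) μ (Q ω)) m := by
      refine hmeasF.aestronglyMeasurable.congr ?_
      filter_upwards [hQQ'] with ω h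
      rw [h]
    -- pointwise bound
    have hdrB : drB B r μ μ ≤ 0 := drB_self_nonpos' B hr1 μ
    have hbound : ∀ᵐ ω ∂m, ‖l₁ (X ω) μ + l₂ (X ω) μ (Q ω)‖ ≤
        (|l₁ 0 μ| + Cl * (Real.sqrt ‖B‖ * ‖X ω‖)) + (C₁ + C₃ * ‖Q ω‖ ^ 2) := by
      filter_upwards [hQae] with ω hQω
      have h2 := hl₂bd (X ω) μ (Q ω) hμP2 hQω
      have habs2 : |l₂ (X ω) μ (Q ω)| ≤ C₁ + C₃ * ‖Q ω‖ ^ 2 := by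
        rw [abs_le]
        constructor
        · nlinarith [sq_nonneg ‖Q ω‖, h2.1]
        · exact h2.2
      have hlip := hl_lip (X ω) 0 μ μ q₀ hμP2 hμP2 hq₀
      have t1 : |l₁ (X ω) μ| - |l₁ 0 μ| ≤ |l₁ (X ω) μ - l₁ 0 μ| :=
        abs_sub_abs_le_abs_sub _ _
      have t2 : |l₁ (X ω) μ - l₁ 0 μ| ≤ Cl * (nrmB B (X ω - 0) + drB B r μ μ) := by
        have := abs_nonneg (l₂ (X ω) μ q₀ - l₂ 0 μ q₀)
        linarith
      have t3 : nrmB B (X ω - 0) = nrmB B (X ω) := by rw [sub_zero]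
      have t4 : Cl * (nrmB B (X ω) + drB B r μ μ) ≤ Cl * nrmB B (X ω) :=
        mul_le_mul_of_nonneg_left (by linarith) hCl
      have t5 : Cl * nrmB B (X ω) ≤ Cl * (Real.sqrt ‖B‖ * ‖X ω‖) :=
        mul_le_mul_of_nonneg_left (nrmB_le' B _) hCl
      rw [Real.norm_eq_abs]
      calc |l₁ (X ω) μ + l₂ (X ω) μ (Q ω)| ≤ |l₁ (X ω) μ| + |l₂ (X ω) μ (Q ω)| :=
            abs_add_le _ _
      _ ≤ (|l₁ 0 μ| + Cl * (Real.sqrt ‖B‖ * ‖X ω‖)) + (C₁ + C₃ * ‖Q ω‖ ^ 2) := by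
            rw [t3] at t2
            linarith
    -- integrability of the dominating function
    have hintX2 : Integrable (fun ω => ‖X ω‖ ^ 2) m :=
      integrable_sq_of_lintegral' hX.aestronglyMeasurable hX2
    have hintXn : Integrable (fun ω => ‖X ω‖) m :=
      integrable_norm_of_sq' hX.aestronglyMeasurable hintX2
    have hintQ2 : Integrable (fun ω => ‖Q ω‖ ^ 2) m :=
      integrable_sq_of_lintegral' hQ.aestronglyMeasurable hQ2
    have hdom : Integrable (fun ω =>
        (|l₁ 0 μ| + Cl * (Real.sqrt ‖B‖ * ‖X ω‖)) + (C₁ + C₃ * ‖Q ω‖ ^ 2)) m := by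
      refine Integrable.add (Integrable.add (integrable_const _) ?_)
        (Integrable.add (integrable_const _) ?_)
      · exact (hintXn.const_mul (Real.sqrt ‖B‖)).const_mul Cl
      · exact hintQ2.const_mul C₃
    exact Integrable.mono' hdom haesm hbound
  refine ⟨2 * Cl, by positivity, ?_⟩
  intro X Y Q hX hY hQ hX2 hY2 hQae hQ2
  have hIX := key X Q hX hQ hX2 hQae hQ2
  have hIY := key Y Q hY hQ hY2 hQae hQ2
  refine ⟨hIX, ?_⟩
  set μX : Measure H := m.map X with hμX
  set μY : Measure H := m.map Y with hμY
  have hP2X : IsP2 μX := hP2 X hX hX2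
  have hP2Y : IsP2 μY := hP2 Y hY hY2
  set g : ℝ → ℝ := fun ω => nrmB B (X ω - Y ω) with hgdef
  have hgm : Measurable g := (nrmB_measurable' B).comp (hX.sub hY)
  have hg0 : ∀ ω, 0 ≤ g ω := fun ω => nrmB_nonneg' _ _
  have hintX2 : Integrable (fun ω => ‖X ω‖ ^ 2) m :=
    integrable_sq_of_lintegral' hX.aestronglyMeasurable hX2
  have hintY2 : Integrable (fun ω => ‖Y ω‖ ^ 2) m :=
    integrable_sq_of_lintegral' hY.aestronglyMeasurable hY2
  have hg2int : Integrable (fun ω => g ω ^ 2) m := by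
    have hb : Integrable (fun ω => ‖B‖ * (2 * ‖X ω‖ ^ 2 + 2 * ‖Y ω‖ ^ 2)) m :=
      ((hintX2.const_mul 2).add (hintY2.const_mul 2)).const_mul ‖B‖
    refine Integrable.mono' hb (hgm.pow_const 2).aestronglyMeasurable ?_
    refine Filter.Eventually.of_forall fun ω => ?_
    rw [Real.norm_of_nonneg (sq_nonneg _)]
    have h1 : g ω ≤ Real.sqrt ‖B‖ * ‖X ω - Y ω‖ := nrmB_le' B _
    have h2 : ‖X ω - Y ω‖ ≤ ‖X ω‖ + ‖Y ω‖ := norm_sub_le _ _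
    have h3 : Real.sqrt ‖B‖ ^ 2 = ‖B‖ := Real.sq_sqrt (norm_nonneg _)
    have h4 : g ω * g ω ≤ (Real.sqrt ‖B‖ * ‖X ω - Y ω‖) * (Real.sqrt ‖B‖ * ‖X ω - Y ω‖) :=
      mul_le_mul h1 h1 (hg0 ω) (by positivity)
    have h5 : ‖X ω - Y ω‖ * ‖X ω - Y ω‖ ≤ (‖X ω‖ + ‖Y ω‖) * (‖X ω‖ + ‖Y ω‖) :=
      mul_le_mul h2 h2 (norm_nonneg _) (by positivity)
    nlinarith [h4, h5, h3, norm_nonneg B, sq_nonneg (‖X ω‖ - ‖Y ω‖)]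
  have hgint : Integrable g m := by
    have hb : Integrable (fun ω => 1 + g ω ^ 2) m := (integrable_const 1).add hg2int
    refine Integrable.mono' hb hgm.aestronglyMeasurable ?_
    refine Filter.Eventually.of_forall fun ω => ?_
    rw [Real.norm_of_nonneg (hg0 ω)]
    nlinarith [sq_nonneg (g ω - 1)]
  set I2 : ℝ := ∫ ω, g ω ^ 2 ∂m with hI2def
  set D : ℝ := drB B r μX μY with hDdef
  have hgrint : Integrable (fun ω => g ω ^ r) m := by
    have hb : Integrable (fun ω => 1 + g ω ^ 2) m := (integrable_const 1).add hg2int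
    refine Integrable.mono' hb ((hgm.pow_const r).aestronglyMeasurable) ?_
    refine Filter.Eventually.of_forall fun ω => ?_
    rw [Real.norm_of_nonneg (Real.rpow_nonneg (hg0 ω) r)]
    rcases le_or_gt (g ω) 1 with h | h
    · have := Real.rpow_le_one (hg0 ω) h (by linarith : (0:ℝ) ≤ r)
      linarith [sq_nonneg (g ω)]
    · have h1 : g ω ^ r ≤ g ω ^ (2:ℝ) :=
        Real.rpow_le_rpow_of_exponent_le h.le (by linarith)
      have h2 : g ω ^ (2:ℝ) = g ω ^ (2:ℕ) := by
        rw [show (2:ℝ) = ((2:ℕ):ℝ) by norm_num, Real.rpow_natCast]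
      rw [h2] at h1
      linarith
  have hDle : D ≤ Real.sqrt I2 := by
    calc D ≤ (∫ ω, nrmB B (X ω - Y ω) ^ r ∂m) ^ (1/r) := drB_le_coupling' B r m hX hY
    _ ≤ Real.sqrt I2 := holder_r' m hr1 hr2 hgm.aestronglyMeasurable hg0 hg2int
  have hSle : ∫ ω, g ω ∂m ≤ Real.sqrt I2 :=
    holder_one' m hgm.aestronglyMeasurable hg0 hg2int
  have hptwise : ∀ᵐ ω ∂m,
      |(l₁ (X ω) μX + l₂ (X ω) μX (Q ω)) - (l₁ (Y ω) μY + l₂ (Y ω) μY (Q ω))| ≤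
        Cl * (g ω + D) := by
    filter_upwards [hQae] with ω hQω
    have hlip := hl_lip (X ω) (Y ω) μX μY (Q ω) hP2X hP2Y hQω
    have hre : (l₁ (X ω) μX + l₂ (X ω) μX (Q ω)) - (l₁ (Y ω) μY + l₂ (Y ω) μY (Q ω)) =
        (l₁ (X ω) μX - l₁ (Y ω) μY) + (l₂ (X ω) μX (Q ω) - l₂ (Y ω) μY (Q ω)) := by ring
    rw [hre]
    calc |(l₁ (X ω) μX - l₁ (Y ω) μY) + (l₂ (X ω) μX (Q ω) - l₂ (Y ω) μY (Q ω))| ≤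
          |l₁ (X ω) μX - l₁ (Y ω) μY| + |l₂ (X ω) μX (Q ω) - l₂ (Y ω) μY (Q ω)| := abs_add_le _ _
    _ ≤ Cl * (g ω + D) := hlip
  have hCD : Integrable (fun ω => Cl * (g ω + D)) m :=
    (hgint.add (integrable_const D)).const_mul Cl
  calc |(∫ ω, (l₁ (X ω) μX + l₂ (X ω) μX (Q ω)) ∂m) -
        (∫ ω, (l₁ (Y ω) μY + l₂ (Y ω) μY (Q ω)) ∂m)|
      = |∫ ω, ((l₁ (X ω) μX + l₂ (X ω) μX (Q ω)) -
          (l₁ (Y ω) μY + l₂ (Y ω) μY (Q ω))) ∂m| := by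
        rw [integral_sub hIX hIY]
    _ ≤ ∫ ω, |(l₁ (X ω) μX + l₂ (X ω) μX (Q ω)) -
          (l₁ (Y ω) μY + l₂ (Y ω) μY (Q ω))| ∂m := by
        simpa [Real.norm_eq_abs] using norm_integral_le_integral_norm
          (μ := m) (fun ω => (l₁ (X ω) μX + l₂ (X ω) μX (Q ω)) -
            (l₁ (Y ω) μY + l₂ (Y ω) μY (Q ω)))
    _ ≤ ∫ ω, Cl * (g ω + D) ∂m :=
        integral_mono_ae (hIX.sub hIY).abs hCD hptwise
    _ = Cl * ((∫ ω, g ω ∂m) + D) := by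
        rw [integral_const_mul, integral_add hgint (integrable_const D), integral_const]
        simp [measure_univ]
    _ ≤ Cl * (Real.sqrt I2 + Real.sqrt I2) :=
        mul_le_mul_of_nonneg_left (add_le_add hSle hDle) hCl
    _ = 2 * Cl * Real.sqrt I2 := by ring

end
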